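/- arXiv:1308.2046 — 7 statements merged into one kernel-verified Lean document; each statement's English description precedes it below -/
import Mathlib

section
/- For every λ > 0 there exists a jointly continuous one-parameter family Θ : [0,π] × Pol₂(7;λ) → Pol₂(7;λ) such that: (i) for every θ ∈ [0,π] the map Θ(θ,·) is a bijection of Pol₂(7;λ) onto itself; (ii) Θ(0,·) is the identity; (iii) Θ(π,·) sends each polygon (e₁,…,e₇) to its mirror image with respect to the axis {x=0}, i.e. Θ(π,e)ᵢ = −conj(eᵢ) for every i; and (iv) for every θ, every polygon, and every index i, Im(Θ(θ,e)ᵢ) = Im(eᵢ) (the projection of each polygon onto the axis {x=0} is kept). (The paper states moreover that each Θ(θ,·) is an isometry; here each Θ(θ,·) is required to be a continuous bijection.) -/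
open Finset in
/-- `Pol₂(n;λ)`: the space of closed `n`-gons in the plane `ℂ` of total length `2λ`. -/
def Pol2 (n : ℕ) (lam : ℝ) : Set (Fin n → ℂ) :=
  {e | ∑ i, e i = 0 ∧ ∑ i, ‖e i‖ = 2 * lam}

namespace MirrorAux

open Finset


noncomputable section

/-- A linear complex structure on the sum-zero hyperplane of `ℝ⁷`. -/
def Jmap (x : Fin 7 → ℝ) : Fin 7 → ℝ
  | 0 => -x 1
  | 1 => x 0
  | 2 => -x 3
  | 3 => x 2
  | 4 => -x 5
  | 5 => x 4
  | 6 => -(x 0 - x 1 + x 2 - x 3 + x 4 - x 5)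

/-- Rotation by angle `θ` for the complex structure `Jmap`. -/
def Rmap (θ : ℝ) (x : Fin 7 → ℝ) : Fin 7 → ℝ :=
  fun i => Real.cos θ * x i + Real.sin θ * Jmap x i

lemma sum_Jmap (x : Fin 7 → ℝ) : ∑ i, Jmap x i = 0 := by
  simp [Fin.sum_univ_seven, Jmap]; ring

lemma Jmap_Jmap (x : Fin 7 → ℝ) (hx : ∑ i, x i = 0) :
    Jmap (Jmap x) = fun i => -x i := by
  rw [Fin.sum_univ_seven] at hx
  funext i
  fin_cases i <;> simp [Jmap] <;> linarith

lemma Jmap_lin (a b : ℝ) (x y : Fin 7 → ℝ) :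
    Jmap (fun i => a * x i + b * y i) = fun i => a * Jmap x i + b * Jmap y i := by
  funext i; fin_cases i <;> simp [Jmap] <;> ring

lemma sum_Rmap (θ : ℝ) (x : Fin 7 → ℝ) (hx : ∑ i, x i = 0) :
    ∑ i, Rmap θ x i = 0 := by
  simp [Rmap, Finset.sum_add_distrib, ← Finset.mul_sum, hx, sum_Jmap]

lemma Rmap_Rmap (θ θ' : ℝ) (x : Fin 7 → ℝ) (hx : ∑ i, x i = 0) :
    Rmap θ' (Rmap θ x) = Rmap (θ' + θ) x := by
  have h1 : Jmap (Rmap θ x) = fun i => Real.cos θ * Jmap x i + Real.sin θ * (-x i) := by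
    have h2 := Jmap_lin (Real.cos θ) (Real.sin θ) x (Jmap x)
    have h3 : Jmap (Rmap θ x) = Jmap (fun i => Real.cos θ * x i + Real.sin θ * Jmap x i) := rfl
    rw [h3, h2, Jmap_Jmap x hx]
  funext i
  simp only [Rmap, h1, Real.cos_add, Real.sin_add]
  ring

lemma Rmap_neg_Rmap (θ : ℝ) (x : Fin 7 → ℝ) (hx : ∑ i, x i = 0) :
    Rmap (-θ) (Rmap θ x) = x := by
  rw [Rmap_Rmap θ (-θ) x hx, neg_add_cancel]
  funext i; simp [Rmap]

lemma Rmap_zero (x : Fin 7 → ℝ) : Rmap 0 x = x := by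
  funext i; simp [Rmap]

lemma Rmap_pi (x : Fin 7 → ℝ) : Rmap Real.pi x = fun i => -x i := by
  funext i; simp [Rmap]

lemma Rmap_smul (θ c : ℝ) (x : Fin 7 → ℝ) :
    Rmap θ (fun i => c * x i) = fun i => c * Rmap θ x i := by
  have h : Jmap (fun i => c * x i) = fun i => c * Jmap x i := by
    funext i; fin_cases i <;> simp [Jmap] <;> ring
  funext i; simp only [Rmap, h]; ring

lemma Rmap_ne_zero (θ : ℝ) (x : Fin 7 → ℝ) (hx : ∑ i, x i = 0) (h : x ≠ 0) :
    Rmap θ x ≠ 0 := by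
  intro h0
  apply h
  have h1 := Rmap_neg_Rmap θ x hx
  rw [h0] at h1
  rw [← h1]
  funext i; fin_cases i <;> simp [Rmap, Jmap]

lemma continuous_Jmap_apply (i : Fin 7) : Continuous fun x : Fin 7 → ℝ => Jmap x i := by
  fin_cases i <;> · simp only [Jmap]; fun_prop

lemma continuous_Rmap : Continuous fun p : ℝ × (Fin 7 → ℝ) => Rmap p.1 p.2 := by
  apply continuous_pi
  intro i
  simp only [Rmap]
  have := continuous_Jmap_apply i
  fun_prop


/-- real parts of the edges -/
def reOf (e : Fin 7 → ℂ) : Fin 7 → ℝ := fun i => (e i).re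

/-- The defining property of the value of the isotopy at time `θ` on polygon `e`. -/
def P (lam θ : ℝ) (e e' : Fin 7 → ℂ) : Prop :=
  e' ∈ Pol2 7 lam ∧ (∀ i, (e' i).im = (e i).im) ∧
    ∃ s : ℝ, 0 ≤ s ∧ ∀ i, (e' i).re = s * Rmap θ (reOf e) i

lemma abs_eq_sqrt (z : ℂ) : ‖z‖ = Real.sqrt (z.re ^ 2 + z.im ^ 2) := by
  rw [Complex.norm_def, Complex.normSq_apply]; ring_nf

lemma sum_re_eq_zero {lam : ℝ} {e : Fin 7 → ℂ} (he : e ∈ Pol2 7 lam) :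
    ∑ i, (e i).re = 0 := by
  rw [← Complex.re_sum, he.1, Complex.zero_re]

lemma sum_im_eq_zero {lam : ℝ} {e : Fin 7 → ℂ} (he : e ∈ Pol2 7 lam) :
    ∑ i, (e i).im = 0 := by
  rw [← Complex.im_sum, he.1, Complex.zero_im]

lemma scale_unique {lam : ℝ} (u y : Fin 7 → ℝ) {s t : ℝ} (hs : 0 ≤ s) (ht : 0 ≤ t)
    (hst : s ≤ t)
    (h1 : ∑ i, Real.sqrt ((s * u i) ^ 2 + (y i) ^ 2) = 2 * lam)
    (h2 : ∑ i, Real.sqrt ((t * u i) ^ 2 + (y i) ^ 2) = 2 * lam) :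
    ∀ i, s * u i = t * u i := by
  have hle : ∀ i ∈ univ, Real.sqrt ((s * u i) ^ 2 + (y i) ^ 2)
      ≤ Real.sqrt ((t * u i) ^ 2 + (y i) ^ 2) := by
    intro i _
    apply Real.sqrt_le_sqrt
    nlinarith [mul_le_mul_of_nonneg_right (mul_self_le_mul_self hs hst) (sq_nonneg (u i))]
  have hall := (Finset.sum_eq_sum_iff_of_le hle).mp (h1.trans h2.symm)
  intro i
  have h3 := hall i (mem_univ i)
  have h4 : (s * u i) ^ 2 + (y i) ^ 2 = (t * u i) ^ 2 + (y i) ^ 2 := by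
    have r1 : (0:ℝ) ≤ (s * u i) ^ 2 + (y i) ^ 2 := by positivity
    have r2 : (0:ℝ) ≤ (t * u i) ^ 2 + (y i) ^ 2 := by positivity
    exact (Real.sqrt_inj r1 r2).mp h3
  rcases eq_or_ne (u i) 0 with h | h
  · rw [h]; ring
  · have h5 : s ^ 2 = t ^ 2 := by
      have : (0:ℝ) < (u i) ^ 2 := by positivity
      have h6 : (s * u i) ^ 2 = (t * u i) ^ 2 := by linarith
      have h7 : s ^ 2 * (u i) ^ 2 = t ^ 2 * (u i) ^ 2 := by ring_nf; ring_nf at h6; linarith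
      exact mul_right_cancel₀ (ne_of_gt this) h7
    have : s = t := by
      calc s = Real.sqrt (s ^ 2) := (Real.sqrt_sq hs).symm
        _ = Real.sqrt (t ^ 2) := by rw [h5]
        _ = t := Real.sqrt_sq ht
    rw [this]

lemma P_unique {lam θ : ℝ} {e e₁ e₂ : Fin 7 → ℂ} (h₁ : P lam θ e e₁) (h₂ : P lam θ e e₂) :
    e₁ = e₂ := by
  obtain ⟨m₁, him₁, s₁, hs₁, hre₁⟩ := h₁
  obtain ⟨m₂, him₂, s₂, hs₂, hre₂⟩ := h₂
  set u := Rmap θ (reOf e) with hu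
  have key : ∀ i, s₁ * u i = s₂ * u i := by
    have habs : ∀ (s : ℝ) (f : Fin 7 → ℂ), (∀ i, (f i).re = s * u i) → (∀ i, (f i).im = (e i).im) →
        (∑ i, ‖f i‖) = ∑ i, Real.sqrt ((s * u i) ^ 2 + ((e i).im) ^ 2) := by
      intro s f hre him
      apply Finset.sum_congr rfl
      intro i _
      rw [abs_eq_sqrt, hre i, him i]
    have hs1 : ∑ i, Real.sqrt ((s₁ * u i) ^ 2 + ((e i).im) ^ 2) = 2 * lam := by
      rw [← habs s₁ e₁ hre₁ him₁]; exact m₁.2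
    have hs2 : ∑ i, Real.sqrt ((s₂ * u i) ^ 2 + ((e i).im) ^ 2) = 2 * lam := by
      rw [← habs s₂ e₂ hre₂ him₂]; exact m₂.2
    rcases le_total s₁ s₂ with h | h
    · exact scale_unique u _ hs₁ hs₂ h hs1 hs2
    · intro i; exact (scale_unique u _ hs₂ hs₁ h hs2 hs1 i).symm
  funext i
  apply Complex.ext
  · rw [hre₁ i, hre₂ i]; exact key i
  · rw [him₁ i, him₂ i]

lemma P_exists (lam θ : ℝ) (e : Fin 7 → ℂ) (he : e ∈ Pol2 7 lam) :
    ∃ e', P lam θ e e' := by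
  by_cases hx : reOf e = 0
  · refine ⟨e, he, fun i => rfl, 0, le_refl 0, fun i => ?_⟩
    have : (e i).re = 0 := congrFun hx i
    rw [this, zero_mul]
  · have hxsum : ∑ i, reOf e i = 0 := sum_re_eq_zero he
    set x := reOf e with hxdef
    set u := Rmap θ x with hudef
    have hu : u ≠ 0 := Rmap_ne_zero θ x hxsum hx
    obtain ⟨j, hj⟩ := Function.ne_iff.mp hu
    set g : ℝ → ℝ := fun s => ∑ i, Real.sqrt ((s * u i) ^ 2 + ((e i).im) ^ 2) with hgdef
    have hgc : Continuous g := by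
      apply continuous_finset_sum
      intro i _
      exact Real.continuous_sqrt.comp (by fun_prop)
    have hg0 : g 0 < 2 * lam := by
      obtain ⟨k, hk⟩ := Function.ne_iff.mp hx
      have h1 : g 0 = ∑ i, |(e i).im| := by
        apply Finset.sum_congr rfl
        intro i _
        rw [zero_mul]
        simp [Real.sqrt_sq_eq_abs]
      rw [h1, ← he.2]
      apply Finset.sum_lt_sum
      · intro i _
        rw [abs_eq_sqrt]
        rw [show |(e i).im| = Real.sqrt ((e i).im ^ 2) from (Real.sqrt_sq_eq_abs _).symm]
        apply Real.sqrt_le_sqrt; nlinarith [sq_nonneg (e i).re]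
      · refine ⟨k, mem_univ k, ?_⟩
        rw [abs_eq_sqrt]
        rw [show |(e k).im| = Real.sqrt ((e k).im ^ 2) from (Real.sqrt_sq_eq_abs _).symm]
        apply Real.sqrt_lt_sqrt (by positivity)
        have hk' : (e k).re ≠ 0 := hk
        have : (0:ℝ) < (e k).re ^ 2 := by positivity
        linarith
    set s₀ : ℝ := (2 * lam + 1) / |u j| with hs₀def
    have hujpos : 0 < |u j| := abs_pos.mpr hj
    have hlam' : 0 ≤ 2 * lam := by
      rw [← he.2]; exact Finset.sum_nonneg fun i _ => (norm_nonneg _)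
    have hs₀nonneg : 0 ≤ s₀ := div_nonneg (by linarith) (le_of_lt hujpos)
    have hgs₀ : 2 * lam ≤ g s₀ := by
      have h1 : Real.sqrt ((s₀ * u j) ^ 2 + ((e j).im) ^ 2) ≤ g s₀ :=
        Finset.single_le_sum (f := fun i => Real.sqrt ((s₀ * u i) ^ 2 + ((e i).im) ^ 2))
          (fun i _ => Real.sqrt_nonneg _) (mem_univ j)
      have h2 : |s₀ * u j| ≤ Real.sqrt ((s₀ * u j) ^ 2 + ((e j).im) ^ 2) := by
        rw [show |s₀ * u j| = Real.sqrt ((s₀ * u j) ^ 2) from (Real.sqrt_sq_eq_abs _).symm]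
        apply Real.sqrt_le_sqrt; nlinarith [sq_nonneg (e j).im]
      have h3 : |s₀ * u j| = 2 * lam + 1 := by
        rw [abs_mul, abs_of_nonneg hs₀nonneg, hs₀def, div_mul_cancel₀]
        exact ne_of_gt hujpos
      linarith
    have hIvt := intermediate_value_Icc hs₀nonneg hgc.continuousOn
    have hmem : (2 * lam) ∈ Set.Icc (g 0) (g s₀) := ⟨le_of_lt hg0, hgs₀⟩
    obtain ⟨s, hsIcc, hgs⟩ := hIvt hmem
    refine ⟨fun i => ⟨s * u i, (e i).im⟩, ⟨?_, ?_⟩, fun i => rfl, s, hsIcc.1, fun i => rfl⟩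
    · apply Complex.ext
      · rw [Complex.re_sum]
        simp only
        rw [← Finset.mul_sum, sum_Rmap θ x hxsum, mul_zero, Complex.zero_re]
      · rw [Complex.im_sum]
        simp only
        rw [sum_im_eq_zero he, Complex.zero_im]
    · rw [← hgs]
      apply Finset.sum_congr rfl
      intro i _
      rw [abs_eq_sqrt]

lemma re_sq_le {lam : ℝ} (f : Fin 7 → ℂ) (hf : ∑ i, ‖f i‖ = 2 * lam)
    (i : Fin 7) :
    (f i).re ^ 2 ≤ 4 * lam * (2 * lam - ∑ j, |(f j).im|) := by
  have h1 : ‖f i‖ ≤ 2 * lam := by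
    rw [← hf]
    exact Finset.single_le_sum (fun j _ => norm_nonneg _) (mem_univ i)
  have h2 : |(f i).im| ≤ ‖f i‖ := Complex.abs_im_le_norm _
  have h3 : ‖f i‖ - |(f i).im| ≤ 2 * lam - ∑ j, |(f j).im| := by
    have h := Finset.single_le_sum
      (f := fun j => ‖f j‖ - |(f j).im|)
      (fun j _ => sub_nonneg.mpr (Complex.abs_im_le_norm _)) (mem_univ i)
    rw [Finset.sum_sub_distrib, hf] at h
    exact h
  have h4 : (f i).re ^ 2 + (f i).im ^ 2 = (‖f i‖) ^ 2 := by
    rw [Complex.sq_norm, Complex.normSq_apply]; ring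
  have h6 : ‖f i‖ + |(f i).im| ≤ 4 * lam := by linarith
  have h7 : (0:ℝ) ≤ ‖f i‖ + |(f i).im| :=
    add_nonneg (norm_nonneg _) (abs_nonneg _)
  have h8 : (0:ℝ) ≤ 2 * lam - ∑ j, |(f j).im| := by linarith
  have h5 : (‖f i‖ - |(f i).im|) * (‖f i‖ + |(f i).im|)
      ≤ (2 * lam - ∑ j, |(f j).im|) * (4 * lam) := mul_le_mul h3 h6 h7 h8
  nlinarith [sq_abs (f i).im]

lemma re_eq_zero_of_im_full {lam : ℝ} {f : Fin 7 → ℂ} (hmem : f ∈ Pol2 7 lam)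
    (him : ∑ j, |(f j).im| = 2 * lam) : ∀ i, (f i).re = 0 := by
  intro i
  have h := re_sq_le f hmem.2 i
  rw [him] at h
  have : (f i).re ^ 2 ≤ 0 := by linarith
  have h2 : (f i).re ^ 2 = 0 := le_antisymm this (sq_nonneg _)
  exact pow_eq_zero_iff (by norm_num) |>.mp h2


lemma P_symm {lam θ : ℝ} {e e' : Fin 7 → ℂ} (he : e ∈ Pol2 7 lam) (h : P lam θ e e') :
    P lam (-θ) e' e := by
  obtain ⟨m', him, s, hs, hre⟩ := h
  refine ⟨he, fun i => (him i).symm, ?_⟩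
  have hx : ∑ i, reOf e i = 0 := sum_re_eq_zero he
  have hcomp : Rmap (-θ) (reOf e') = fun i => s * reOf e i := by
    have h1 : reOf e' = fun i => s * Rmap θ (reOf e) i := funext hre
    rw [h1, Rmap_smul, Rmap_neg_Rmap θ _ hx]
  rcases eq_or_lt_of_le hs with hs0 | hs0
  · -- s = 0 : then `e'` has zero real parts, hence so does `e`.
    have hre0 : ∀ i, (e' i).re = 0 := fun i => by rw [hre i, ← hs0, zero_mul]
    have him2 : ∑ j, |(e j).im| = 2 * lam := by
      rw [← m'.2]
      symm
      apply Finset.sum_congr rfl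
      intro j _
      rw [abs_eq_sqrt, hre0 j, him j]
      simp [Real.sqrt_sq_eq_abs]
    have hzero := re_eq_zero_of_im_full he him2
    exact ⟨0, le_refl 0, fun i => by rw [hzero i, zero_mul]⟩
  · refine ⟨s⁻¹, inv_nonneg.mpr (le_of_lt hs0), fun i => ?_⟩
    rw [congrFun hcomp i, inv_mul_cancel_left₀ (ne_of_gt hs0)]
    rfl

lemma isCompact_Pol2 (lam : ℝ) : IsCompact (Pol2 7 lam) := by
  apply Metric.isCompact_of_isClosed_isBounded
  · have h1 : IsClosed {e : Fin 7 → ℂ | ∑ i, e i = 0} :=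
      isClosed_eq (continuous_finset_sum _ fun i _ => continuous_apply i) continuous_const
    have h2 : IsClosed {e : Fin 7 → ℂ | ∑ i, ‖e i‖ = 2 * lam} :=
      isClosed_eq (continuous_finset_sum _ fun i _ =>
        continuous_norm.comp (continuous_apply i)) continuous_const
    exact h1.inter h2
  · apply Bornology.IsBounded.subset (Metric.isBounded_closedBall (x := (0 : Fin 7 → ℂ))
      (r := 2 * lam))
    intro e he
    have hnn : (0:ℝ) ≤ 2 * lam := by
      rw [← he.2]; exact Finset.sum_nonneg fun i _ => norm_nonneg _
    rw [Metric.mem_closedBall, dist_pi_le_iff hnn]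
    intro i
    simp only [Pi.zero_apply, Complex.dist_eq, sub_zero]
    rw [← he.2]
    exact Finset.single_le_sum (fun j _ => norm_nonneg _) (mem_univ i)

end

end MirrorAux

open MirrorAux Finset in
/-- There is a jointly continuous one-parameter family of continuous bijections of
`Pol₂(7;λ)` which starts at the identity, ends at the mirror reflection
`eᵢ ↦ −conj(eᵢ)` across the axis `{x = 0}`, and keeps the projection of each polygon
onto the axis `{x = 0}` (i.e. the imaginary parts of all the edges) at all times. -/
theorem pol2_seven_mirror_isotopy (lam : ℝ) (hlam : 0 < lam) :
    ∃ Θ : Set.Icc (0 : ℝ) Real.pi × Pol2 7 lam → Pol2 7 lam,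
      Continuous Θ ∧
      (∀ θ : Set.Icc (0 : ℝ) Real.pi, Function.Bijective (fun e => Θ (θ, e))) ∧
      (∀ e, Θ (⟨0, Set.mem_Icc.mpr ⟨le_refl 0, Real.pi_nonneg⟩⟩, e) = e) ∧
      (∀ e (i : Fin 7),
        (Θ (⟨Real.pi, Set.mem_Icc.mpr ⟨Real.pi_nonneg, le_refl Real.pi⟩⟩, e)).1 i =
          -(starRingEnd ℂ) (e.1 i)) ∧
      (∀ (θ : Set.Icc (0 : ℝ) Real.pi) e (i : Fin 7),
        ((Θ (θ, e)).1 i).im = (e.1 i).im) := by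
  classical
  choose Phi hPhi using fun (θ : ℝ) (e : Pol2 7 lam) => P_exists lam θ e.1 e.2
  refine ⟨fun p => ⟨Phi p.1.1 p.2, (hPhi p.1.1 p.2).1⟩, ?_, ?_, ?_, ?_, ?_⟩
  · -- Continuity
    apply SeqContinuous.continuous
    intro seq p hp
    rw [tendsto_subtype_rng]
    apply Filter.tendsto_of_subseq_tendsto
    intro ns hns
    obtain ⟨w, hwmem, ms, hms, hwt⟩ := (isCompact_Pol2 lam).tendsto_subseq
      (x := fun n => Phi ((seq (ns n)).1 : ℝ) (seq (ns n)).2)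
      (fun n => (hPhi _ _).1)
    refine ⟨ms, ?_⟩
    set θ₀ : ℝ := (p.1 : ℝ) with hθ₀
    set E : Fin 7 → ℂ := (p.2 : Fin 7 → ℂ) with hE
    set q : ℕ → Set.Icc (0:ℝ) Real.pi × Pol2 7 lam := fun k => seq (ns (ms k)) with hqdef
    have hq : Filter.Tendsto q Filter.atTop (nhds p) :=
      hp.comp (hns.comp hms.tendsto_atTop)
    set θk : ℕ → ℝ := fun k => ((q k).1 : ℝ) with hθk
    set fk : ℕ → Fin 7 → ℂ := fun k => Phi (θk k) (q k).2 with hfk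
    have hθt : Filter.Tendsto θk Filter.atTop (nhds θ₀) :=
      ((continuous_subtype_val.comp continuous_fst).tendsto p).comp hq
    have het : Filter.Tendsto (fun k => ((q k).2 : Fin 7 → ℂ)) Filter.atTop (nhds E) :=
      ((continuous_subtype_val.comp continuous_snd).tendsto p).comp hq
    have hwt' : Filter.Tendsto fk Filter.atTop (nhds w) := hwt
    suffices hw : w = Phi θ₀ p.2 by
      have hfin : Filter.Tendsto fk Filter.atTop (nhds (Phi θ₀ p.2)) := hw ▸ hwt'
      exact hfin
    refine P_unique (e := E) ?_ (hPhi θ₀ p.2)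
    have hPk : ∀ k, P lam (θk k) ((q k).2 : Fin 7 → ℂ) (fk k) := fun k => hPhi _ _
    -- imaginary parts
    have himt : ∀ i, (w i).im = (E i).im := by
      intro i
      have ha : Filter.Tendsto (fun k => fk k i) Filter.atTop (nhds (w i)) :=
        ((continuous_apply i).tendsto w).comp hwt'
      have l1 : Filter.Tendsto (fun k => (fk k i).im) Filter.atTop (nhds ((w i).im)) :=
        (Complex.continuous_im.tendsto _).comp ha
      have hb : Filter.Tendsto (fun k => ((q k).2 : Fin 7 → ℂ) i) Filter.atTop (nhds (E i)) :=
        ((continuous_apply i).tendsto E).comp het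
      have l2 : Filter.Tendsto (fun k => (((q k).2 : Fin 7 → ℂ) i).im) Filter.atTop
          (nhds ((E i).im)) :=
        (Complex.continuous_im.tendsto _).comp hb
      have l3 : (fun k => (fk k i).im) = fun k => (((q k).2 : Fin 7 → ℂ) i).im :=
        funext fun k => (hPk k).2.1 i
      rw [l3] at l1
      exact tendsto_nhds_unique l1 l2
    refine ⟨hwmem, himt, ?_⟩
    have hret : ∀ i, Filter.Tendsto (fun k => (fk k i).re) Filter.atTop (nhds ((w i).re)) := by
      intro i
      have ha : Filter.Tendsto (fun k => fk k i) Filter.atTop (nhds (w i)) :=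
        ((continuous_apply i).tendsto w).comp hwt'
      exact (Complex.continuous_re.tendsto _).comp ha
    by_cases hx0 : reOf E = 0
    · -- degenerate case: the limit polygon has no real extent
      refine ⟨0, le_refl 0, fun i => ?_⟩
      rw [zero_mul]
      have hSt : Filter.Tendsto (fun k => ∑ j, |(((q k).2 : Fin 7 → ℂ) j).im|)
          Filter.atTop (nhds (∑ j, |(E j).im|)) := by
        have hc : Continuous fun (f : Fin 7 → ℂ) => ∑ j, |(f j).im| :=
          continuous_finset_sum _ fun j _ =>
            continuous_abs.comp (Complex.continuous_im.comp (continuous_apply j))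
        exact (hc.tendsto E).comp het
      have hSfull : ∑ j, |(E j).im| = 2 * lam := by
        rw [← p.2.2.2]
        apply Finset.sum_congr rfl
        intro j _
        rw [abs_eq_sqrt]
        rw [show ((p.2 : Fin 7 → ℂ) j).re = (0:ℝ) from congrFun hx0 j]
        simp [Real.sqrt_sq_eq_abs]
        rfl
      have hbound : ∀ k i, |(fk k i).re| ≤
          Real.sqrt (4 * lam * (2 * lam - ∑ j, |(((q k).2 : Fin 7 → ℂ) j).im|)) := by
        intro k i
        have h1 := re_sq_le (fk k) (hPk k).1.2 i
        have h2 : ∑ j, |(fk k j).im| = ∑ j, |(((q k).2 : Fin 7 → ℂ) j).im| :=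
          Finset.sum_congr rfl fun j _ => by rw [(hPk k).2.1 j]
        rw [h2] at h1
        calc |(fk k i).re| = Real.sqrt ((fk k i).re ^ 2) := (Real.sqrt_sq_eq_abs _).symm
          _ ≤ _ := Real.sqrt_le_sqrt h1
      have hrhs : Filter.Tendsto
          (fun k => Real.sqrt (4 * lam * (2 * lam - ∑ j, |(((q k).2 : Fin 7 → ℂ) j).im|)))
          Filter.atTop (nhds 0) := by
        have : Filter.Tendsto (fun k => 4 * lam * (2 * lam - ∑ j, |(((q k).2 : Fin 7 → ℂ) j).im|))
            Filter.atTop (nhds (4 * lam * (2 * lam - ∑ j, |(E j).im|))) :=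
          (tendsto_const_nhds.mul (tendsto_const_nhds.sub hSt))
        rw [hSfull] at this
        simp only [sub_self, mul_zero] at this
        have := (Real.continuous_sqrt.tendsto 0).comp this
        simpa [Function.comp_def] using this
      have habs0 : Filter.Tendsto (fun k => |(fk k i).re|) Filter.atTop (nhds 0) :=
        squeeze_zero (fun k => abs_nonneg _) (fun k => hbound k i) hrhs
      have hre0 : Filter.Tendsto (fun k => (fk k i).re) Filter.atTop (nhds 0) := by
        rw [show (0:ℝ) = 0 from rfl]
        exact tendsto_zero_iff_abs_tendsto_zero _ |>.mpr habs0
      exact tendsto_nhds_unique (hret i) hre0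
    · -- generic case
      have hxsum : ∑ i, reOf E i = 0 := sum_re_eq_zero p.2.2
      have hu : Rmap θ₀ (reOf E) ≠ 0 := Rmap_ne_zero θ₀ _ hxsum hx0
      obtain ⟨j, hj⟩ := Function.ne_iff.mp hu
      set uk : ℕ → Fin 7 → ℝ := fun k => Rmap (θk k) (reOf ((q k).2 : Fin 7 → ℂ)) with hukdef
      have hreoft : Filter.Tendsto (fun k => reOf ((q k).2 : Fin 7 → ℂ)) Filter.atTop
          (nhds (reOf E)) := by
        have hc : Continuous (reOf : (Fin 7 → ℂ) → (Fin 7 → ℝ)) :=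
          continuous_pi fun i => Complex.continuous_re.comp (continuous_apply i)
        exact (hc.tendsto E).comp het
      have hukt : ∀ i, Filter.Tendsto (fun k => uk k i) Filter.atTop
          (nhds (Rmap θ₀ (reOf E) i)) := by
        intro i
        have h1 : Filter.Tendsto (fun k => (θk k, reOf ((q k).2 : Fin 7 → ℂ)))
            Filter.atTop (nhds (θ₀, reOf E)) := hθt.prodMk_nhds hreoft
        have h2 := (continuous_Rmap.tendsto (θ₀, reOf E)).comp h1
        exact ((continuous_apply i).tendsto _).comp h2
      choose sk hsk1 hsk2 using fun k => (hPk k).2.2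
      have hjev : ∀ᶠ k in Filter.atTop, uk k j ≠ 0 := (hukt j).eventually_ne hj
      set s : ℝ := (w j).re / Rmap θ₀ (reOf E) j with hs
      have hskt : Filter.Tendsto sk Filter.atTop (nhds s) := by
        have h1 : Filter.Tendsto (fun k => (fk k j).re / uk k j) Filter.atTop (nhds s) :=
          (hret j).div (hukt j) hj
        apply h1.congr'
        filter_upwards [hjev] with k hk
        rw [hsk2 k j]
        field_simp
        rfl
      have hsnn : 0 ≤ s := ge_of_tendsto' hskt hsk1
      refine ⟨s, hsnn, fun i => ?_⟩
      have h1 : Filter.Tendsto (fun k => sk k * uk k i) Filter.atTop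
          (nhds (s * Rmap θ₀ (reOf E) i)) := hskt.mul (hukt i)
      have h2 : (fun k => (fk k i).re) = fun k => sk k * uk k i := funext fun k => hsk2 k i
      have hri := hret i
      rw [h2] at hri
      exact tendsto_nhds_unique hri h1
  · -- Bijectivity
    intro θ
    apply Function.bijective_iff_has_inverse.mpr
    refine ⟨fun e' => ⟨Phi (-(θ : ℝ)) e', (hPhi _ _).1⟩, ?_, ?_⟩
    · intro e
      apply Subtype.ext
      exact P_unique (hPhi (-(θ:ℝ)) _) (P_symm e.2 (hPhi (θ:ℝ) e))
    · intro e'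
      apply Subtype.ext
      have h := P_symm e'.2 (hPhi (-(θ:ℝ)) e')
      rw [neg_neg] at h
      exact P_unique (hPhi (θ:ℝ) _) h
  · -- identity at 0
    intro e
    apply Subtype.ext
    refine P_unique (hPhi 0 e) ⟨e.2, fun i => rfl, 1, zero_le_one, fun i => ?_⟩
    rw [Rmap_zero, one_mul]
    rfl
  · -- mirror at π
    intro e i
    have key : Phi Real.pi e = fun i => -(starRingEnd ℂ) (e.1 i) := by
      refine P_unique (hPhi Real.pi e) ⟨⟨?_, ?_⟩, fun i => by simp, 1, zero_le_one, fun i => ?_⟩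
      · rw [Finset.sum_neg_distrib, ← map_sum, e.2.1, map_zero, neg_zero]
      · have : ∀ i, ‖-(starRingEnd ℂ) (e.1 i)‖ = ‖e.1 i‖ := by
          intro i
          rw [norm_neg, Complex.norm_conj]
        rw [Finset.sum_congr rfl fun i _ => this i]
        exact e.2.2
      · rw [Rmap_pi]
        simp [reOf]
    exact congrFun key i
  · -- imaginary parts kept
    intro θ e i
    exact (hPhi (θ:ℝ) e).2.1 i
end

section
/- Let n ≥ 1, λ > 0, and let z : Fin n → ℂ satisfy ∑ᵢ (Re zᵢ)(Im zᵢ) = 0, ∑ᵢ (Re zᵢ)² = λ, and ∑ᵢ (Im zᵢ)² = λ. Then the coordinatewise squaring map H(z) = (z₁², …, zₙ²) lands in Pol₂(n;λ): ∑ᵢ zᵢ² = 0 and ∑ᵢ |zᵢ²| = 2λ. -/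
open Finset in
/-- The Hausmann–Knutson coordinatewise squaring map `H(z) = (z₁², …, zₙ²)` carries a
point of the (rescaled) real Stiefel manifold `V₂(ℝⁿ)` to a closed `n`-gon in the plane
of total length `2λ`, i.e. a point of `Pol₂(n;λ)`. -/
theorem squaring_lands_in_Pol2 (n : ℕ) (hn : 1 ≤ n) (lam : ℝ) (hlam : 0 < lam)
    (z : Fin n → ℂ)
    (hab : ∑ i, (z i).re * (z i).im = 0)
    (ha : ∑ i, (z i).re ^ 2 = lam)
    (hb : ∑ i, (z i).im ^ 2 = lam) :
    ∑ i, (z i) ^ 2 = 0 ∧ ∑ i, ‖(z i) ^ 2‖ = 2 * lam := by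
  constructor
  · apply Complex.ext
    · simp only [Complex.re_sum, Complex.sq_norm, pow_two, Complex.mul_re, Complex.zero_re]
      rw [Finset.sum_sub_distrib]
      simp only [← pow_two]
      rw [ha, hb, sub_self]
    · simp only [Complex.im_sum, pow_two, Complex.mul_im, Complex.zero_im]
      have : ∀ i : Fin n, (z i).re * (z i).im + (z i).im * (z i).re
          = 2 * ((z i).re * (z i).im) := fun i => by ring
      rw [Finset.sum_congr rfl fun i _ => this i, ← Finset.mul_sum, hab, mul_zero]
  · have : ∀ i, ‖(z i) ^ 2‖ = (z i).re ^ 2 + (z i).im ^ 2 := by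
      intro i
      rw [norm_pow, ← Complex.normSq_eq_norm_sq, Complex.normSq_apply]; ring
    simp only [this]
    rw [Finset.sum_add_distrib, ha, hb]; ring
end

section
/- Let n ≥ 1 and let e : Fin n → ℂ satisfy ∑ᵢ eᵢ = 0 and ∑ᵢ |eᵢ| = 2. Then there exists a unique z : Fin n → ℂ such that for every i, zᵢ² = eᵢ and either Re zᵢ > 0, or Re zᵢ = 0 and Im zᵢ ≥ 0. Moreover this z satisfies ∑ᵢ (Re zᵢ)(Im zᵢ) = 0, ∑ᵢ (Re zᵢ)² = 1, and ∑ᵢ (Im zᵢ)² = 1; in particular the squaring map H is surjective from the Stiefel manifold V₂(ℝⁿ) onto Pol₂(n), with a distinguished normalized lift. -/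
open Finset Complex

lemma exists_sqrt_branch (c : ℂ) :
    ∃ z : ℂ, z ^ 2 = c ∧ (0 < z.re ∨ (z.re = 0 ∧ 0 ≤ z.im)) := by
  refine ⟨(Real.sqrt (‖c‖) : ℂ) * Complex.exp ((c.arg / 2 : ℝ) * Complex.I), ?_, ?_⟩
  · have : ((Real.sqrt (‖c‖) : ℂ) * Complex.exp ((c.arg / 2 : ℝ) * Complex.I)) ^ 2
        = ((Real.sqrt (‖c‖) : ℂ))^2 * Complex.exp ((c.arg / 2 : ℝ) * Complex.I)^2 := by
      ring
    rw [this, ← Complex.exp_nat_mul]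
    have h1 : ((Real.sqrt (‖c‖) : ℂ))^2 = (‖c‖ : ℂ) := by
      rw [← Complex.ofReal_pow, Real.sq_sqrt (norm_nonneg c)]
    have h2 : (2:ℕ) * (((c.arg / 2 : ℝ)) * Complex.I) = (c.arg : ℂ) * Complex.I := by
      push_cast; ring
    rw [h1, h2, Complex.norm_mul_exp_arg_mul_I]
  · have hre : ((Real.sqrt (‖c‖) : ℂ) * Complex.exp ((c.arg / 2 : ℝ) * Complex.I)).re
        = Real.sqrt (‖c‖) * Real.cos (c.arg / 2) := by
      rw [Complex.mul_re, Complex.exp_ofReal_mul_I_re, Complex.exp_ofReal_mul_I_im]; simp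
    have him : ((Real.sqrt (‖c‖) : ℂ) * Complex.exp ((c.arg / 2 : ℝ) * Complex.I)).im
        = Real.sqrt (‖c‖) * Real.sin (c.arg / 2) := by
      rw [Complex.mul_im, Complex.exp_ofReal_mul_I_re, Complex.exp_ofReal_mul_I_im]; simp
    rw [hre, him]
    rcases eq_or_ne c 0 with rfl | hc
    · right; simp
    have habs : 0 < Real.sqrt (‖c‖) := Real.sqrt_pos.2 (norm_pos_iff.mpr hc)
    have h1 : -(Real.pi/2) < c.arg / 2 := by
      have := Complex.neg_pi_lt_arg c; linarith
    have h2 : c.arg / 2 ≤ Real.pi / 2 := by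
      have := Complex.arg_le_pi c; linarith
    have hcos : 0 ≤ Real.cos (c.arg / 2) :=
      Real.cos_nonneg_of_mem_Icc ⟨h1.le, h2⟩
    rcases lt_or_eq_of_le hcos with h | h
    · left; positivity
    · right
      have harg : c.arg / 2 = Real.pi / 2 := by
        rcases lt_or_eq_of_le h2 with h2' | h2'
        · exfalso
          have : 0 < Real.cos (c.arg / 2) := Real.cos_pos_of_mem_Ioo ⟨h1, h2'⟩
          linarith
        · exact h2'
      constructor
      · rw [← h]; ring
      · rw [harg, Real.sin_pi_div_two]
        positivity

lemma sqrt_branch_unique {z w : ℂ} (hz : 0 < z.re ∨ (z.re = 0 ∧ 0 ≤ z.im))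
    (hw : 0 < w.re ∨ (w.re = 0 ∧ 0 ≤ w.im)) (h : w ^ 2 = z ^ 2) : w = z := by
  have : (w - z) * (w + z) = 0 := by ring_nf; linear_combination h
  rcases mul_eq_zero.1 this with h' | h'
  · exact sub_eq_zero.1 h'
  · have hwz : w = -z := by linear_combination h'
    subst hwz
    simp only [Complex.neg_re, Complex.neg_im] at hw
    rcases hz with hz | ⟨hz1, hz2⟩
    · rcases hw with hw | ⟨hw1, _⟩ <;> [linarith; linarith]
    · rcases hw with hw | ⟨_, hw2⟩
      · linarith
      · have : z.im = 0 := le_antisymm (by linarith) hz2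
        apply Complex.ext <;> simp [hz1, this]

open Finset in
/-- Every closed `n`-gon of total length `2` in the plane has a unique normalized lift
under the coordinatewise squaring map `H`: there is a unique `z` with `zᵢ² = eᵢ` and
`Re zᵢ > 0`, or `Re zᵢ = 0` and `Im zᵢ ≥ 0`, for every `i`; moreover this `z` is a point
of the Stiefel manifold `V₂(ℝⁿ)`. -/
theorem squaring_surjective_normalized_lift (n : ℕ) (hn : 1 ≤ n) (e : Fin n → ℂ)
    (hsum : ∑ i, e i = 0) (hlen : ∑ i, ‖e i‖ = 2) :
    ∃ z : Fin n → ℂ,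
      (∀ i, (z i) ^ 2 = e i ∧ (0 < (z i).re ∨ ((z i).re = 0 ∧ 0 ≤ (z i).im))) ∧
      (∀ w : Fin n → ℂ,
        (∀ i, (w i) ^ 2 = e i ∧ (0 < (w i).re ∨ ((w i).re = 0 ∧ 0 ≤ (w i).im))) → w = z) ∧
      ∑ i, (z i).re * (z i).im = 0 ∧
      ∑ i, (z i).re ^ 2 = 1 ∧
      ∑ i, (z i).im ^ 2 = 1 := by
  choose z hz1 hz2 using fun i => exists_sqrt_branch (e i)
  refine ⟨z, fun i => ⟨hz1 i, hz2 i⟩, ?_, ?_⟩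
  · intro w hw
    funext i
    exact sqrt_branch_unique (hz2 i) ((hw i).2) (by rw [(hw i).1, hz1 i])
  · -- sums
    have hsq : ∀ i, e i = (z i) ^ 2 := fun i => (hz1 i).symm
    have habs : ∀ i, ‖e i‖ = (z i).re ^ 2 + (z i).im ^ 2 := by
      intro i
      rw [hsq i, norm_pow, Complex.sq_norm, Complex.normSq_apply]; ring
    have hre : ∑ i, ((z i).re ^ 2 - (z i).im ^ 2) = 0 := by
      have := congrArg Complex.re hsum
      rw [Complex.re_sum, Complex.zero_re] at this
      rw [← this]
      apply Finset.sum_congr rfl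
      intro i _
      have h' : (z i ^ 2).re = (z i).re ^ 2 - (z i).im ^ 2 := by
        rw [sq, Complex.mul_re]; ring
      rw [hsq i, h']
    have him : ∑ i, (2 * ((z i).re * (z i).im)) = 0 := by
      have := congrArg Complex.im hsum
      rw [Complex.im_sum] at this
      simp only [hsq, pow_two, Complex.mul_im, Complex.zero_im] at this
      rw [← this]
      apply Finset.sum_congr rfl
      intro i _; ring
    have hlen' : ∑ i, ((z i).re ^ 2 + (z i).im ^ 2) = 2 := by
      rw [← hlen]; exact Finset.sum_congr rfl fun i _ => (habs i).symm
    have hre2 : ∑ i, (z i).re ^ 2 = 1 := by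
      rw [Finset.sum_sub_distrib] at hre
      rw [Finset.sum_add_distrib] at hlen'
      linarith
    have him2 : ∑ i, (z i).im ^ 2 = 1 := by
      rw [Finset.sum_sub_distrib] at hre
      rw [Finset.sum_add_distrib] at hlen'
      linarith
    refine ⟨?_, hre2, him2⟩
    rw [← Finset.mul_sum] at him
    linarith
end

section
/- The fibers of the Hopf map are the orbits of left multiplication by unit complex numbers: if p, q ∈ ℍ with q ≠ 0 satisfy (star p) * i * p = (star q) * i * q, then there exist real numbers a, b with a² + b² = 1 such that p = (a + b i) * q. -/
/-- The imaginary unit `i` of the quaternions. -/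
def quatI : Quaternion ℝ := ⟨0, 1, 0, 0⟩
/-- The complex number `a + b i`, embedded in the quaternions as the span of `1` and `i`. -/
def quatC (a b : ℝ) : Quaternion ℝ := ⟨a, b, 0, 0⟩

lemma key (u : Quaternion ℝ) (h : star u * quatI * u = quatI) :
    ∃ a b : ℝ, a ^ 2 + b ^ 2 = 1 ∧ u = quatC a b := by
  have h1 := congrArg QuaternionAlgebra.imI h
  have h2 := congrArg QuaternionAlgebra.imJ h
  have h3 := congrArg QuaternionAlgebra.imK h
  simp [Quaternion.imI_mul, Quaternion.imJ_mul, Quaternion.imK_mul, Quaternion.re_mul, Quaternion.re_star, Quaternion.imI_star, Quaternion.imJ_star, Quaternion.imK_star] at h1 h2 h3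
  simp [quatI] at h1 h2 h3
  obtain ⟨x, y, z, w⟩ := u
  simp only at h1 h2 h3
  have hz : z = 0 ∧ w = 0 := by constructor <;> nlinarith [sq_nonneg z, sq_nonneg w, sq_nonneg x, sq_nonneg y, sq_nonneg (z*z+w*w)]
  refine ⟨x, y, ?_, ?_⟩
  · nlinarith [hz.1, hz.2]
  · simp [quatC, hz.1, hz.2]
    rfl

/-- The fibers of the Hopf map `q ↦ (star q) * i * q` are the orbits of left
multiplication by unit complex numbers. -/
theorem hopf_fiber (p q : Quaternion ℝ) (hq : q ≠ 0)
    (h : star p * quatI * p = star q * quatI * q) :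
    ∃ a b : ℝ, a ^ 2 + b ^ 2 = 1 ∧ p = quatC a b * q := by
  set u := p * q⁻¹ with hu
  have hpu : p = u * q := by
    rw [hu, mul_assoc, inv_mul_cancel₀ hq, mul_one]
  have hkey : star u * quatI * u = quatI := by
    have hsq : star q ≠ 0 := star_ne_zero.mpr hq
    have : star u * quatI * u = (star q)⁻¹ * (star p * quatI * p) * q⁻¹ := by
      rw [hu, star_mul, star_inv₀]
      simp [mul_assoc]
    rw [this, h]
    rw [show (star q)⁻¹ * (star q * quatI * q) * q⁻¹
        = ((star q)⁻¹ * star q) * quatI * (q * q⁻¹) by simp [mul_assoc]]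
    rw [inv_mul_cancel₀ hsq, mul_inv_cancel₀ hq, one_mul, mul_one]
  obtain ⟨a, b, hab, huc⟩ := key u hkey
  exact ⟨a, b, hab, by rw [hpu, huc]⟩
end

section
/- The coordinatewise Hopf map carries the complex Stiefel manifold V₂(ℂⁿ) into Pol₃(n): let n ≥ 1 and let a, b : Fin n → ℂ satisfy ∑ᵢ |aᵢ|² = 1, ∑ᵢ |bᵢ|² = 1, and ∑ᵢ aᵢ · conj(bᵢ) = 0. For each i let qᵢ ∈ ℍ be the quaternion qᵢ = Re(aᵢ) + Im(aᵢ) i + Re(bᵢ) j + Im(bᵢ) k. Then ∑ᵢ (star qᵢ) * i * qᵢ = 0 and ∑ᵢ ‖(star qᵢ) * i * qᵢ‖ = 2; that is, the purely imaginary quaternions Hopf(qᵢ), viewed as vectors in ℝ³, form a closed n-gon of total length 2. -/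
lemma hopf_formula (x y z w : ℝ) :
    (star ⟨x, y, z, w⟩ * quatI * ⟨x, y, z, w⟩ : Quaternion ℝ) =
      ⟨0, x^2 + y^2 - z^2 - w^2, 2*(y*z - x*w), 2*(x*z + y*w)⟩ := by
  have key : ∀ p : Quaternion ℝ, p = ⟨x, y, z, w⟩ →
      star p * quatI * p = ⟨0, x^2 + y^2 - z^2 - w^2, 2*(y*z - x*w), 2*(x*z + y*w)⟩ := by
    intro p hp
    ext <;> simp [Quaternion.re_mul, Quaternion.imI_mul, Quaternion.imJ_mul,
      Quaternion.imK_mul] <;> simp [hp, quatI] <;> ring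
  exact key _ rfl

lemma quatI_norm : ‖quatI‖ = 1 := by
  have h : ‖quatI‖ * ‖quatI‖ = 1 := by
    rw [← Quaternion.normSq_eq_norm_mul_self]
    rw [Quaternion.normSq_def']
    simp [quatI]
  nlinarith [norm_nonneg quatI]

lemma qre_sum {α : Type*} (s : Finset α) (f : α → Quaternion ℝ) :
    (∑ i ∈ s, f i).re = ∑ i ∈ s, (f i).re :=
  map_sum (AddMonoidHom.mk' QuaternionAlgebra.re (fun _ _ => rfl)) f s

lemma qimI_sum {α : Type*} (s : Finset α) (f : α → Quaternion ℝ) :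
    (∑ i ∈ s, f i).imI = ∑ i ∈ s, (f i).imI :=
  map_sum (AddMonoidHom.mk' QuaternionAlgebra.imI (fun _ _ => rfl)) f s

lemma qimJ_sum {α : Type*} (s : Finset α) (f : α → Quaternion ℝ) :
    (∑ i ∈ s, f i).imJ = ∑ i ∈ s, (f i).imJ :=
  map_sum (AddMonoidHom.mk' QuaternionAlgebra.imJ (fun _ _ => rfl)) f s

lemma qimK_sum {α : Type*} (s : Finset α) (f : α → Quaternion ℝ) :
    (∑ i ∈ s, f i).imK = ∑ i ∈ s, (f i).imK :=
  map_sum (AddMonoidHom.mk' QuaternionAlgebra.imK (fun _ _ => rfl)) f s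

open Finset in
/-- The coordinatewise Hopf map carries the complex Stiefel manifold `V₂(ℂⁿ)` into
`Pol₃(n)`: if `(a, b)` is a pair of Hermitian-orthonormal vectors in `ℂⁿ` and
`qᵢ = Re(aᵢ) + Im(aᵢ) i + Re(bᵢ) j + Im(bᵢ) k`, then the purely imaginary quaternions
`Hopf(qᵢ) = (star qᵢ) * i * qᵢ` form a closed `n`-gon of total length `2`. -/
theorem hopf_stiefel_to_Pol3 (n : ℕ) (hn : 1 ≤ n) (a b : Fin n → ℂ)
    (ha : ∑ i, ‖a i‖ ^ 2 = 1)
    (hb : ∑ i, ‖b i‖ ^ 2 = 1)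
    (hab : ∑ i, a i * (starRingEnd ℂ) (b i) = 0)
    (q : Fin n → Quaternion ℝ)
    (hq : ∀ i, q i = ⟨(a i).re, (a i).im, (b i).re, (b i).im⟩) :
    ∑ i, star (q i) * quatI * q i = 0 ∧ ∑ i, ‖star (q i) * quatI * q i‖ = 2 := by
  have habs : ∀ z : ℂ, ‖z‖ ^ 2 = z.re ^ 2 + z.im ^ 2 := by
    intro z
    rw [Complex.sq_norm, Complex.normSq_apply]; ring
  have ha' : ∑ i, ((a i).re ^ 2 + (a i).im ^ 2) = 1 := by
    rw [← ha]; exact Finset.sum_congr rfl fun i _ => (habs (a i)).symm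
  have hb' : ∑ i, ((b i).re ^ 2 + (b i).im ^ 2) = 1 := by
    rw [← hb]; exact Finset.sum_congr rfl fun i _ => (habs (b i)).symm
  have hre : ∑ i, ((a i).re * (b i).re + (a i).im * (b i).im) = 0 := by
    have h2 := congrArg Complex.re hab
    simp only [Complex.re_sum, Complex.mul_re, Complex.conj_re, Complex.conj_im,
      Complex.zero_re] at h2
    rw [← h2]; exact Finset.sum_congr rfl fun i _ => by ring
  have him : ∑ i, ((a i).im * (b i).re - (a i).re * (b i).im) = 0 := by
    have h2 := congrArg Complex.im hab
    simp only [Complex.im_sum, Complex.mul_im, Complex.conj_re, Complex.conj_im,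
      Complex.zero_im] at h2
    rw [← h2]; exact Finset.sum_congr rfl fun i _ => by ring
  have key : ∀ i, star (q i) * quatI * q i =
      (⟨0, (a i).re^2 + (a i).im^2 - ((b i).re^2 + (b i).im^2),
        2*((a i).im*(b i).re - (a i).re*(b i).im),
        2*((a i).re*(b i).re + (a i).im*(b i).im)⟩ : Quaternion ℝ) := by
    intro i
    rw [hq i, hopf_formula]
    ext <;> simp <;> ring
  constructor
  · simp_rw [key]
    ext
    · erw [qre_sum]; simp [Quaternion.re_zero]
    · erw [qimI_sum]
      simpa [Finset.sum_sub_distrib, ha', hb', Quaternion.imI_zero] using (by norm_num : (1:ℝ) - 1 = 0)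
    · erw [qimJ_sum]
      simp only [← Finset.mul_sum, him]
      simp [Quaternion.imJ_zero]
    · erw [qimK_sum]
      simp only [← Finset.mul_sum, hre]
      simp [Quaternion.imK_zero]
  · have hnorm : ∀ i, ‖star (q i) * quatI * q i‖ =
        ‖a i‖^2 + ‖b i‖^2 := by
      intro i
      rw [norm_mul, norm_mul, norm_star, quatI_norm, mul_one,
        ← Quaternion.normSq_eq_norm_mul_self, Quaternion.normSq_def', hq i, habs, habs]
      ring
    rw [Finset.sum_congr rfl fun i _ => hnorm i, Finset.sum_add_distrib, ha, hb]
    norm_num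
end

section
/- Every quaternion can be normalized within its Hopf fiber: for every q ∈ ℍ there exist real numbers a, b with a² + b² = 1 such that, writing α = a + b i ∈ ℍ, the quaternion α * q has i-component equal to 0 and nonnegative real part, and (star (α * q)) * i * (α * q) = (star q) * i * q. -/
lemma hopf_inv (a b : ℝ) (hab : a ^ 2 + b ^ 2 = 1) (q : Quaternion ℝ) :
    star (quatC a b * q) * quatI * (quatC a b * q) = star q * quatI * q := by
  have hmid : star (quatC a b) * quatI * quatC a b = quatI := by
    ext <;>
      simp only [Quaternion.re_mul, Quaternion.imI_mul, Quaternion.imJ_mul,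
        Quaternion.imK_mul, Quaternion.re_star, Quaternion.imI_star, Quaternion.imJ_star,
        Quaternion.imK_star] <;> simp [quatC, quatI] <;> (first | ring1 | linear_combination hab)
  calc star (quatC a b * q) * quatI * (quatC a b * q)
      = star q * (star (quatC a b) * quatI * quatC a b) * q := by
        rw [star_mul]; noncomm_ring
    _ = star q * quatI * q := by rw [hmid]

/-- Every quaternion can be normalized within its Hopf fiber: there is a unit complex
number `α = a + b i` such that `α * q` has vanishing `i`-component and nonnegative real
part, while the Hopf image is unchanged. -/
theorem hopf_normalization (q : Quaternion ℝ) :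
    ∃ a b : ℝ, a ^ 2 + b ^ 2 = 1 ∧
      (quatC a b * q).imI = 0 ∧
      0 ≤ (quatC a b * q).re ∧
      star (quatC a b * q) * quatI * (quatC a b * q) = star q * quatI * q := by
  by_cases h : q.re = 0 ∧ q.imI = 0
  · refine ⟨1, 0, by norm_num, ?_, ?_, hopf_inv 1 0 (by norm_num) q⟩ <;>
      simp only [Quaternion.imI_mul, Quaternion.re_mul] <;> simp [quatC, h.1, h.2]
  · set r := Real.sqrt (q.re ^ 2 + q.imI ^ 2) with hr
    have hpos : 0 < q.re ^ 2 + q.imI ^ 2 := by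
      rcases not_and_or.mp h with h' | h' <;> positivity
    have hrpos : 0 < r := Real.sqrt_pos.mpr hpos
    have hr2 : r ^ 2 = q.re ^ 2 + q.imI ^ 2 := Real.sq_sqrt hpos.le
    refine ⟨q.re / r, -q.imI / r, ?_, ?_, ?_, hopf_inv _ _ ?_ q⟩
    · field_simp
      linarith [hr2]
    · simp only [Quaternion.imI_mul]; simp [quatC]
      ring
    · have : (quatC (q.re / r) (-q.imI / r) * q).re = r := by
        simp only [Quaternion.re_mul]; simp [quatC]
        field_simp
        linarith [hr2]
      rw [this]; exact hrpos.le
    · field_simp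
      linarith [hr2]
end

section
/- Every closed n-gon in ℝ³ of total length 2 has a normalized preimage under the coordinatewise Hopf map: let n ≥ 1 and let e : Fin n → ℝ³ satisfy ∑ᵢ eᵢ = 0 and ∑ᵢ ‖eᵢ‖ = 2. Then there exist a : Fin n → ℝ and b : Fin n → ℂ such that aᵢ ≥ 0 for all i, ∑ᵢ aᵢ² = 1, ∑ᵢ |bᵢ|² = 1, ∑ᵢ aᵢ · bᵢ = 0 (as a complex number), and for every i the edge eᵢ has coordinates eᵢ = ( aᵢ² − |bᵢ|², −2 aᵢ Im(bᵢ), 2 aᵢ Re(bᵢ) ). Equivalently, the quaternions qᵢ = aᵢ + Re(bᵢ) j + Im(bᵢ) k form a normalized point of the complex Stiefel manifold V₂(ℂⁿ) with Hopf(qᵢ) = eᵢ for all i. -/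
private lemma normsq3 (v : EuclideanSpace ℝ (Fin 3)) :
    ‖v‖ ^ 2 = v 0 ^ 2 + v 1 ^ 2 + v 2 ^ 2 := by
  rw [EuclideanSpace.norm_eq, Real.sq_sqrt (by positivity)]
  simp [Fin.sum_univ_three, Real.norm_eq_abs, sq_abs]

open Finset in
/-- Every closed `n`-gon in `ℝ³` of total length `2` has a normalized preimage under the
coordinatewise Hopf map: there are vectors `a ∈ ℝⁿ` (entrywise nonnegative) and `b ∈ ℂⁿ`
with `∑ aᵢ² = 1`, `∑ |bᵢ|² = 1`, `∑ aᵢ bᵢ = 0`, such that every edge is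
`eᵢ = (aᵢ² − |bᵢ|², −2 aᵢ Im bᵢ, 2 aᵢ Re bᵢ)`; i.e. the quaternions
`qᵢ = aᵢ + Re(bᵢ) j + Im(bᵢ) k` form a normalized point of `V₂(ℂⁿ)` with
`Hopf(qᵢ) = eᵢ`. -/
theorem normalized_hopf_preimage (n : ℕ) (hn : 1 ≤ n)
    (e : Fin n → EuclideanSpace ℝ (Fin 3))
    (hsum : ∑ i, e i = 0) (hlen : ∑ i, ‖e i‖ = 2) :
    ∃ (a : Fin n → ℝ) (b : Fin n → ℂ),
      (∀ i, 0 ≤ a i) ∧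
      ∑ i, (a i) ^ 2 = 1 ∧
      ∑ i, ‖b i‖ ^ 2 = 1 ∧
      ∑ i, (a i : ℂ) * b i = 0 ∧
      ∀ i, e i 0 = (a i) ^ 2 - ‖b i‖ ^ 2 ∧
        e i 1 = -2 * a i * (b i).im ∧
        e i 2 = 2 * a i * (b i).re := by
  classical
  have hcomp : ∀ j, ∑ i, e i j = 0 := by
    intro j
    have h := congrArg (fun v : EuclideanSpace ℝ (Fin 3) => v j) hsum
    simpa using h
  have hrx : ∀ i, 0 ≤ ‖e i‖ + e i 0 := by
    intro i
    have h2 := normsq3 (e i)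
    nlinarith [norm_nonneg (e i), sq_nonneg (e i 1), sq_nonneg (e i 2),
      sq_nonneg (‖e i‖ + e i 0)]
  set a : Fin n → ℝ := fun i => Real.sqrt ((‖e i‖ + e i 0) / 2) with ha
  have ha0 : ∀ i, 0 ≤ a i := fun i => Real.sqrt_nonneg _
  have ha2 : ∀ i, a i ^ 2 = (‖e i‖ + e i 0) / 2 := fun i =>
    Real.sq_sqrt (by linarith [hrx i])
  set b : Fin n → ℂ := fun i =>
    if a i = 0 then (Real.sqrt ‖e i‖ : ℂ)
    else ⟨e i 2 / (2 * a i), -(e i 1) / (2 * a i)⟩ with hb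
  -- facts in the degenerate case
  have hdeg : ∀ i, a i = 0 → ‖e i‖ + e i 0 = 0 ∧ e i 1 = 0 ∧ e i 2 = 0 := by
    intro i hi
    have h0 : (‖e i‖ + e i 0) / 2 ≤ 0 := (Real.sqrt_eq_zero' .. ).mp hi
    have h1 : ‖e i‖ + e i 0 = 0 := le_antisymm (by linarith) (hrx i)
    have h2 := normsq3 (e i)
    have hr : ‖e i‖ = -(e i 0) := by linarith
    rw [hr] at h2
    have hy2 : e i 1 ^ 2 = 0 := by nlinarith [sq_nonneg (e i 1), sq_nonneg (e i 2)]
    have hz2 : e i 2 ^ 2 = 0 := by nlinarith [sq_nonneg (e i 1), sq_nonneg (e i 2)]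
    exact ⟨h1, pow_eq_zero_iff (by norm_num) |>.mp hy2,
      pow_eq_zero_iff (by norm_num) |>.mp hz2⟩
  have hre : ∀ i, a i * (b i).re = e i 2 / 2 := by
    intro i
    by_cases hi : a i = 0
    · simp [hb, hi, (hdeg i hi).2.2]
    · simp only [hb, hi, if_neg hi]
      field_simp
  have him : ∀ i, a i * (b i).im = -(e i 1) / 2 := by
    intro i
    by_cases hi : a i = 0
    · simp [hb, hi, (hdeg i hi).2.1]
    · simp only [hb, hi, if_neg hi]
      field_simp
  have hb2 : ∀ i, (b i).re ^ 2 + (b i).im ^ 2 = (‖e i‖ - e i 0) / 2 := by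
    intro i
    by_cases hi : a i = 0
    · obtain ⟨h1, _, _⟩ := hdeg i hi
      simp only [hb, hi, if_pos hi, Complex.ofReal_re, Complex.ofReal_im]
      rw [Real.sq_sqrt (norm_nonneg _)]
      linarith
    · have ha2i := ha2 i
      have hne : a i ≠ 0 := hi
      have h2 := normsq3 (e i)
      simp only [hb, if_neg hi]
      field_simp
      linear_combination (-2 * (‖e i‖ - e i 0)) * ha2i - h2
  have habs : ∀ i, ‖b i‖ ^ 2 = (‖e i‖ - e i 0) / 2 := by
    intro i
    rw [Complex.sq_norm, Complex.normSq_apply, ← hb2 i]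
    ring
  refine ⟨a, b, ha0, ?_, ?_, ?_, ?_⟩
  · have : ∑ i, a i ^ 2 = ∑ i, (‖e i‖ + e i 0) / 2 := by
      exact Finset.sum_congr rfl fun i _ => ha2 i
    rw [this, ← Finset.sum_div, Finset.sum_add_distrib, hlen, hcomp 0]
    norm_num
  · have : ∑ i, ‖b i‖ ^ 2 = ∑ i, (‖e i‖ - e i 0) / 2 := by
      exact Finset.sum_congr rfl fun i _ => habs i
    rw [this, ← Finset.sum_div, Finset.sum_sub_distrib, hlen, hcomp 0]
    norm_num
  · apply Complex.ext
    · rw [Complex.re_sum]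
      have : ∀ i ∈ Finset.univ, ((a i : ℂ) * b i).re = e i 2 / 2 := by
        intro i _
        simp [Complex.mul_re, hre i]
      rw [Finset.sum_congr rfl this, ← Finset.sum_div, hcomp 2]
      simp
    · rw [Complex.im_sum]
      have : ∀ i ∈ Finset.univ, ((a i : ℂ) * b i).im = -(e i 1) / 2 := by
        intro i _
        simp [Complex.mul_im, him i]
      rw [Finset.sum_congr rfl this]
      have : ∑ i, -(e i 1) / 2 = -(∑ i, e i 1) / 2 := by
        rw [← Finset.sum_neg_distrib, ← Finset.sum_div]
      rw [this, hcomp 1]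
      simp
  · intro i
    refine ⟨?_, ?_, ?_⟩
    · rw [ha2 i, habs i]; ring
    · have := him i; linarith
    · have := hre i; linarith
end
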